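/- Every odd C-configuration is a minimal uncolorable degree-feasible configuration. That is, if G = tC_n with n ≥ 5 odd and t ≥ 1, and (X,H) is a cover of G such that each X_v has a partition (X_v^1, X_v^2) where for each i ∈ {1,2} and each pair {u,v} of adjacent vertices of G, H[X_u^i ∪ X_v^i] is a complete bipartite graph K_{t,t} with parts X_u^i and X_v^i, and H is the union of all these graphs, then (X,H) has no independent transversal but (X, H−e) has an independent transversal for every edge e of H. -/

import Mathlib

open Finset

noncomputable section
open scoped Classical

structure DPHypergraph (α : Type) where
  verts : Finset α
  edges : Finset ℕ
  inc : ℕ → Finset α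
  inc_sub : ∀ e ∈ edges, inc e ⊆ verts
  inc_card : ∀ e ∈ edges, 2 ≤ (inc e).card

variable {α β : Type} [DecidableEq α] [DecidableEq β]

namespace DPHypergraph

def degree (G : DPHypergraph α) (v : α) : ℕ :=
  (G.edges.filter (fun e => v ∈ G.inc e)).card

def maxDegree (G : DPHypergraph α) : ℕ := G.verts.sup G.degree

def mult (G : DPHypergraph α) (u v : α) : ℕ :=
  (G.edges.filter (fun e => G.inc e = {u, v})).card

def Adj (G : DPHypergraph α) (u v : α) : Prop :=
  u ≠ v ∧ ∃ e ∈ G.edges, u ∈ G.inc e ∧ v ∈ G.inc e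

def Connected (G : DPHypergraph α) : Prop :=
  ∀ u ∈ G.verts, ∀ v ∈ G.verts, Relation.ReflTransGen G.Adj u v

def IndepSet (H : DPHypergraph β) (S : Finset β) : Prop :=
  ∀ e ∈ H.edges, ¬ H.inc e ⊆ S

def eraseEdge (H : DPHypergraph β) (e₀ : ℕ) : DPHypergraph β where
  verts := H.verts
  edges := H.edges.erase e₀
  inc := H.inc
  inc_sub := fun e he => H.inc_sub e (Finset.mem_of_mem_erase he)
  inc_card := fun e he => H.inc_card e (Finset.mem_of_mem_erase he)

def induce (G : DPHypergraph α) (S : Finset α) : DPHypergraph α where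
  verts := S
  edges := G.edges.filter (fun e => G.inc e ⊆ S)
  inc := G.inc
  inc_sub := fun e he => (Finset.mem_filter.mp he).2
  inc_card := fun e he => G.inc_card e (Finset.mem_filter.mp he).1

def IsSub (G' G : DPHypergraph α) : Prop :=
  G'.verts ⊆ G.verts ∧ G'.edges ⊆ G.edges ∧ ∀ e ∈ G'.edges, G'.inc e = G.inc e

def shrink (G : DPHypergraph α) (v : α) : DPHypergraph α where
  verts := G.verts.erase v
  edges := G.edges.filter (fun e => 2 ≤ ((G.inc e).erase v).card)
  inc := fun e => (G.inc e).erase v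
  inc_sub := by
    intro e he y hy
    rw [Finset.mem_erase] at hy ⊢
    exact ⟨hy.1, G.inc_sub e (Finset.mem_filter.mp he).1 hy.2⟩
  inc_card := fun e he => (Finset.mem_filter.mp he).2

def nbhd (H : DPHypergraph β) (x : β) : Finset β :=
  H.verts.filter (fun y => ∃ e ∈ H.edges, H.inc e = {x, y})

def numComponents (G : DPHypergraph α) : ℕ :=
  (G.verts.image (fun v => G.verts.filter (fun u => Relation.ReflTransGen G.Adj v u))).card

def IsBridge (G : DPHypergraph α) (e : ℕ) : Prop :=
  numComponents (G.eraseEdge e) = numComponents G + ((G.inc e).card - 1)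

def IsSepVertex (G : DPHypergraph α) (v : α) : Prop :=
  ∃ A B : Finset α, A ∪ B = G.verts ∧ A ∩ B = {v} ∧ 2 ≤ A.card ∧ 2 ≤ B.card ∧
    ∀ e ∈ G.edges, G.inc e ⊆ A ∨ G.inc e ⊆ B

def IsBlock (G : DPHypergraph α) (S : Finset α) : Prop :=
  S ⊆ G.verts ∧ (G.induce S).Connected ∧ (∀ v, ¬ IsSepVertex (G.induce S) v) ∧
    ∀ S' : Finset α, S ⊆ S' → S' ⊆ G.verts → (G.induce S').Connected →
      (∀ v, ¬ IsSepVertex (G.induce S') v) → S' = S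

end DPHypergraph

open DPHypergraph

def IsCover (G : DPHypergraph α) (X : α → Finset β) (H : DPHypergraph β) : Prop :=
  (∀ u ∈ G.verts, ∀ v ∈ G.verts, u ≠ v → Disjoint (X u) (X v)) ∧
  H.verts = G.verts.biUnion X ∧
  (∀ v ∈ G.verts, H.IndepSet (X v)) ∧
  ∃ M : ℕ → Finset ℕ,
    (∀ e ∈ G.edges,
      M e ⊆ H.edges ∧
      (∀ e' ∈ M e, (∀ v ∈ G.inc e, (H.inc e' ∩ X v).card = 1) ∧
        H.inc e' ⊆ (G.inc e).biUnion X) ∧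
      ∀ e₁ ∈ M e, ∀ e₂ ∈ M e, e₁ ≠ e₂ → Disjoint (H.inc e₁) (H.inc e₂)) ∧
    H.edges = G.edges.biUnion M

def HasIT (H : DPHypergraph β) (Vs : Finset α) (X : α → Finset β) : Prop :=
  ∃ T : Finset β, H.IndepSet T ∧ ∀ v ∈ Vs, (T ∩ X v).card = 1

def MinUncol (H : DPHypergraph β) (Vs : Finset α) (X : α → Finset β) : Prop :=
  ¬ HasIT H Vs X ∧ ∀ e ∈ H.edges, HasIT (H.eraseEdge e) Vs X

def DPColorableAt (G : DPHypergraph α) (k : ℕ) : Prop :=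
  ∀ (X : α → Finset ℕ) (H : DPHypergraph ℕ),
    IsCover G X H → (∀ v ∈ G.verts, k ≤ (X v).card) → HasIT H G.verts X

def chiDP (G : DPHypergraph α) : ℕ := sInf {k | DPColorableAt G k}

def DPDegreeColorable (G : DPHypergraph α) : Prop :=
  ∀ (X : α → Finset ℕ) (H : DPHypergraph ℕ),
    IsCover G X H → (∀ v ∈ G.verts, G.degree v ≤ (X v).card) → HasIT H G.verts X

def colNum (G : DPHypergraph α) : ℕ :=
  sInf {k | ∀ G' : DPHypergraph α, G'.IsSub G → G'.verts.Nonempty →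
    ∃ v ∈ G'.verts, G'.degree v ≤ k}

def ProperColoring (G : DPHypergraph α) (φ : α → ℕ) : Prop :=
  ∀ e ∈ G.edges, ∃ u ∈ G.inc e, ∃ v ∈ G.inc e, φ u ≠ φ v

def LColorable (G : DPHypergraph α) (L : α → Finset ℕ) : Prop :=
  ∃ φ : α → ℕ, ProperColoring G φ ∧ ∀ v ∈ G.verts, φ v ∈ L v

def chiList (G : DPHypergraph α) : ℕ :=
  sInf {k | ∀ L : α → Finset ℕ, (∀ v ∈ G.verts, k ≤ (L v).card) → LColorable G L}

def IsTKn (B : DPHypergraph α) (t n : ℕ) : Prop :=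
  1 ≤ n ∧ B.verts.card = n ∧ (∀ e ∈ B.edges, (B.inc e).card = 2) ∧
  ∀ u ∈ B.verts, ∀ v ∈ B.verts, u ≠ v → B.mult u v = t

def IsTCn (B : DPHypergraph α) (t n : ℕ) : Prop :=
  3 ≤ n ∧ B.verts.card = n ∧ (∀ e ∈ B.edges, (B.inc e).card = 2) ∧
  ∃ f : ℕ → α,
    B.verts = (Finset.range n).image f ∧
    (∀ i < n, ∀ j < n, i ≠ j → f i ≠ f j) ∧
    ∀ i < n, ∀ j < n, i ≠ j →
      B.mult (f i) (f j) = if j = (i + 1) % n ∨ i = (j + 1) % n then t else 0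

def IsDPHyperbrick (B : DPHypergraph α) : Prop :=
  (∃ t n, 1 ≤ t ∧ 1 ≤ n ∧ IsTKn B t n) ∨
  (∃ t n, 1 ≤ t ∧ 3 ≤ n ∧ IsTCn B t n) ∨
  (∃ e ∈ B.edges, B.verts = B.inc e ∧ B.edges = {e})

def AdjPair (G : DPHypergraph α) (u v : α) : Prop :=
  u ≠ v ∧ ∃ e ∈ G.edges, G.inc e = {u, v}

def IsKConfig (G : DPHypergraph α) (X : α → Finset β) (H : DPHypergraph β) (t n : ℕ) : Prop :=
  1 ≤ t ∧ 1 ≤ n ∧ IsTKn G t n ∧ IsCover G X H ∧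
  ∃ P : α → ℕ → Finset β,
    (∀ v ∈ G.verts, ∀ i ∈ Finset.range (n - 1), ∀ j ∈ Finset.range (n - 1),
      i ≠ j → Disjoint (P v i) (P v j)) ∧
    (∀ v ∈ G.verts, X v = (Finset.range (n - 1)).biUnion (P v)) ∧
    (∀ v ∈ G.verts, ∀ i ∈ Finset.range (n - 1), (P v i).card = t) ∧
    (∀ i ∈ Finset.range (n - 1), ∀ u ∈ G.verts, ∀ v ∈ G.verts, u ≠ v →
      ∀ x ∈ P u i, ∀ y ∈ P v i, ∃ e ∈ H.edges, H.inc e = {x, y}) ∧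
    (∀ e ∈ H.edges, ∃ i ∈ Finset.range (n - 1), ∃ u ∈ G.verts, ∃ v ∈ G.verts,
      u ≠ v ∧ ∃ x ∈ P u i, ∃ y ∈ P v i, H.inc e = {x, y})

def IsOddCConfig (G : DPHypergraph α) (X : α → Finset β) (H : DPHypergraph β) (t n : ℕ) : Prop :=
  1 ≤ t ∧ 5 ≤ n ∧ Odd n ∧ IsTCn G t n ∧ IsCover G X H ∧
  ∃ P : α → ℕ → Finset β,
    (∀ v ∈ G.verts, Disjoint (P v 0) (P v 1)) ∧
    (∀ v ∈ G.verts, X v = P v 0 ∪ P v 1) ∧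
    (∀ v ∈ G.verts, (P v 0).card = t ∧ (P v 1).card = t) ∧
    (∀ i ∈ ({0, 1} : Finset ℕ), ∀ u ∈ G.verts, ∀ v ∈ G.verts, AdjPair G u v →
      ∀ x ∈ P u i, ∀ y ∈ P v i, ∃ e ∈ H.edges, H.inc e = {x, y}) ∧
    (∀ e ∈ H.edges, ∃ i ∈ ({0, 1} : Finset ℕ), ∃ u ∈ G.verts, ∃ v ∈ G.verts,
      AdjPair G u v ∧ ∃ x ∈ P u i, ∃ y ∈ P v i, H.inc e = {x, y})

def IsEvenCConfig (G : DPHypergraph α) (X : α → Finset β) (H : DPHypergraph β) (t n : ℕ) : Prop :=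
  1 ≤ t ∧ 4 ≤ n ∧ Even n ∧ IsTCn G t n ∧ IsCover G X H ∧
  ∃ P : α → ℕ → Finset β, ∃ w w' : α, w ∈ G.verts ∧ w' ∈ G.verts ∧ AdjPair G w w' ∧
    (∀ v ∈ G.verts, Disjoint (P v 0) (P v 1)) ∧
    (∀ v ∈ G.verts, X v = P v 0 ∪ P v 1) ∧
    (∀ v ∈ G.verts, (P v 0).card = t ∧ (P v 1).card = t) ∧
    (∀ i ∈ ({0, 1} : Finset ℕ), ∀ u ∈ G.verts, ∀ v ∈ G.verts, AdjPair G u v →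
      ({u, v} : Finset α) ≠ {w, w'} →
      ∀ x ∈ P u i, ∀ y ∈ P v i, ∃ e ∈ H.edges, H.inc e = {x, y}) ∧
    (∀ x ∈ P w 0, ∀ y ∈ P w' 1, ∃ e ∈ H.edges, H.inc e = {x, y}) ∧
    (∀ x ∈ P w 1, ∀ y ∈ P w' 0, ∃ e ∈ H.edges, H.inc e = {x, y}) ∧
    (∀ e ∈ H.edges, ∃ x y : β, H.inc e = {x, y} ∧
      ((∃ i ∈ ({0, 1} : Finset ℕ), ∃ u ∈ G.verts, ∃ v ∈ G.verts,
        AdjPair G u v ∧ ({u, v} : Finset α) ≠ {w, w'} ∧ x ∈ P u i ∧ y ∈ P v i) ∨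
       (x ∈ P w 0 ∧ y ∈ P w' 1) ∨ (x ∈ P w 1 ∧ y ∈ P w' 0)))

def IsEConfig (G : DPHypergraph α) (X : α → Finset β) (H : DPHypergraph β) : Prop :=
  (∃ e₀ ∈ G.edges, G.edges = {e₀} ∧ G.verts = G.inc e₀) ∧
  IsCover G X H ∧ (∀ v ∈ G.verts, (X v).card = 1) ∧
  ∃ e₁ ∈ H.edges, H.edges = {e₁} ∧ H.inc e₁ = G.verts.biUnion X

def IsMergeOf (G : DPHypergraph α) (X : α → Finset β) (H : DPHypergraph β)
    (G₁ : DPHypergraph α) (X₁ : α → Finset β) (H₁ : DPHypergraph β)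
    (G₂ : DPHypergraph α) (X₂ : α → Finset β) (H₂ : DPHypergraph β)
    (v₁ v₂ vs : α) : Prop :=
  Disjoint G₁.verts G₂.verts ∧ Disjoint G₁.edges G₂.edges ∧
  Disjoint H₁.verts H₂.verts ∧ Disjoint H₁.edges H₂.edges ∧
  v₁ ∈ G₁.verts ∧ v₂ ∈ G₂.verts ∧ vs ∉ G₁.verts ∪ G₂.verts ∧
  G.verts = insert vs (((G₁.verts ∪ G₂.verts).erase v₁).erase v₂) ∧
  G.edges = G₁.edges ∪ G₂.edges ∧
  (∀ e ∈ G₁.edges, G.inc e =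
    if v₁ ∈ G₁.inc e then insert vs ((G₁.inc e).erase v₁) else G₁.inc e) ∧
  (∀ e ∈ G₂.edges, G.inc e =
    if v₂ ∈ G₂.inc e then insert vs ((G₂.inc e).erase v₂) else G₂.inc e) ∧
  H.verts = H₁.verts ∪ H₂.verts ∧ H.edges = H₁.edges ∪ H₂.edges ∧
  (∀ e ∈ H₁.edges, H.inc e = H₁.inc e) ∧ (∀ e ∈ H₂.edges, H.inc e = H₂.inc e) ∧
  X vs = X₁ v₁ ∪ X₂ v₂ ∧
  (∀ u ∈ G₁.verts.erase v₁, X u = X₁ u) ∧ (∀ u ∈ G₂.verts.erase v₂, X u = X₂ u)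

inductive Constructible : DPHypergraph α → (α → Finset β) → DPHypergraph β → Prop where
  | K : ∀ {G : DPHypergraph α} {X : α → Finset β} {H : DPHypergraph β} {t n : ℕ},
      IsKConfig G X H t n → Constructible G X H
  | Codd : ∀ {G : DPHypergraph α} {X : α → Finset β} {H : DPHypergraph β} {t n : ℕ},
      IsOddCConfig G X H t n → Constructible G X H
  | Ceven : ∀ {G : DPHypergraph α} {X : α → Finset β} {H : DPHypergraph β} {t n : ℕ},
      IsEvenCConfig G X H t n → Constructible G X H
  | E : ∀ {G : DPHypergraph α} {X : α → Finset β} {H : DPHypergraph β},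
      IsEConfig G X H → Constructible G X H
  | merge : ∀ {G G₁ G₂ : DPHypergraph α} {X X₁ X₂ : α → Finset β} {H H₁ H₂ : DPHypergraph β}
      {v₁ v₂ vs : α},
      Constructible G₁ X₁ H₁ → Constructible G₂ X₂ H₂ →
      IsMergeOf G X H G₁ X₁ H₁ G₂ X₂ H₂ v₁ v₂ vs → Constructible G X H

def reducedVerts (G : DPHypergraph α) (X : α → Finset β) (H : DPHypergraph β)
    (v : α) (x : β) : Finset β :=
  (G.shrink v).verts.biUnion (fun u => X u \ H.nbhd x)

def reduceH (G : DPHypergraph α) (X : α → Finset β) (H : DPHypergraph β)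
    (v : α) (x : β) : DPHypergraph β where
  verts := reducedVerts G X H v x
  edges := H.edges.filter (fun e =>
    2 ≤ ((H.inc e).erase x).card ∧ (H.inc e).erase x ⊆ reducedVerts G X H v x)
  inc := fun e => (H.inc e).erase x
  inc_sub := fun e he => (Finset.mem_filter.mp he).2.2
  inc_card := fun e he => (Finset.mem_filter.mp he).2.1

section Aux

lemma aux_mod_inj {n a j j' : ℕ} (hj : j < n) (hj' : j' < n)
    (h : (a + j) % n = (a + j') % n) : j = j' := by
  have h1 : j ≡ j' [MOD n] := Nat.ModEq.add_left_cancel' a h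
  unfold Nat.ModEq at h1
  rwa [Nat.mod_eq_of_lt hj, Nat.mod_eq_of_lt hj'] at h1

lemma aux_mod_two {n k : ℕ} (h3 : 3 ≤ n) (hk : k < n) (h : (k + 2) % n = k) : False := by
  have h1 : k ≡ k + 2 [MOD n] := by
    unfold Nat.ModEq; rw [Nat.mod_eq_of_lt hk]; exact h.symm
  have h2 : n ∣ 2 := by simpa using (Nat.modEq_iff_dvd' (Nat.le_add_right k 2)).mp h1
  have := Nat.le_of_dvd (by norm_num) h2
  omega

lemma aux_mod_prev {n k : ℕ} (h3 : 3 ≤ n) (hk : k < n) : ((k + (n - 1)) % n + 1) % n = k := by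
  rw [Nat.mod_add_mod]
  have h : k + (n - 1) + 1 = k + n := by omega
  rw [h, Nat.add_mod_right, Nat.mod_eq_of_lt hk]

lemma aux_succ_ne {n k : ℕ} (h3 : 3 ≤ n) (hk : k < n) : (k + 1) % n ≠ k := by
  intro h
  rcases Nat.lt_or_ge (k + 1) n with h' | h'
  · rw [Nat.mod_eq_of_lt h'] at h; omega
  · have he : k + 1 = n := by omega
    rw [he, Nat.mod_self] at h; omega

lemma aux_parity {n : ℕ} (h3 : 3 ≤ n) (hodd : Odd n) (c : ℕ → ℕ)
    (h01 : ∀ k < n, c k = 0 ∨ c k = 1) (hne : ∀ k < n, c k ≠ c ((k + 1) % n)) : False := by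
  have key : ∀ k, k < n → c k = if Even k then c 0 else 1 - c 0 := by
    intro k
    induction k with
    | zero => intro _; simp
    | succ m ih =>
      intro hm
      have hmn : m < n := by omega
      have h1 := ih hmn
      have h2 := hne m hmn
      rw [Nat.mod_eq_of_lt hm] at h2
      have e1 := h01 m hmn
      have e2 := h01 (m + 1) hm
      have e3 := h01 0 (by omega)
      by_cases hE : Even m
      · simp [hE, Nat.even_add_one] at h1 ⊢; omega
      · simp [hE, Nat.even_add_one] at h1 ⊢; omega
  have hlast := key (n - 1) (by omega)
  have hEv : Even (n - 1) := Nat.Odd.sub_odd hodd odd_one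
  simp [hEv] at hlast
  have h2 := hne (n - 1) (by omega)
  rw [show n - 1 + 1 = n by omega, Nat.mod_self] at h2
  exact h2 hlast

end Aux

/-- every odd C-configuration is a minimal uncolorable degree-feasible
configuration. -/
theorem oddCConfig_minUncol (G : DPHypergraph α) (X : α → Finset β) (H : DPHypergraph β)
    (t n : ℕ) (hC : IsOddCConfig G X H t n) :
    G.Connected ∧ (∀ v ∈ G.verts, G.degree v ≤ (X v).card) ∧
    MinUncol H G.verts X := by
  obtain ⟨ht, hn5, hodd, hTCn, hcover, P, hPdisj, hXP, hPcard, hPcomp, hPed⟩ := hC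
  obtain ⟨hn3, hvcard, hGinc2, f, hverts, hfinj, hmult⟩ := hTCn
  obtain ⟨hXdisj, hHverts, hXindep, M, hMprop, hHed⟩ := hcover
  -- basic facts
  have hfv : ∀ k, k < n → f k ∈ G.verts := by
    intro k hk; rw [hverts]; exact Finset.mem_image.mpr ⟨k, Finset.mem_range.mpr hk, rfl⟩
  have hfi : ∀ k, k < n → ∀ k', k' < n → f k = f k' → k = k' := by
    intro k hk k' hk' h; by_contra hne; exact hfinj k hk k' hk' hne h
  have hsk_lt : ∀ k : ℕ, (k + 1) % n < n := fun k => Nat.mod_lt _ (by omega)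
  have hskne : ∀ k, k < n → (k + 1) % n ≠ k := fun k hk => aux_succ_ne hn3 hk
  have hXv : ∀ k, k < n → ∀ k', k' < n → ∀ x : β, x ∈ X (f k) → x ∈ X (f k') → k = k' := by
    intro k hk k' hk' x h1 h2
    by_contra hne
    have hne' : f k ≠ f k' := hfinj k hk k' hk' hne
    exact Finset.disjoint_left.mp (hXdisj (f k) (hfv k hk) (f k') (hfv k' hk') hne') h1 h2
  have hPX : ∀ k, k < n → ∀ i, i = 0 ∨ i = 1 → P (f k) i ⊆ X (f k) := by
    intro k hk i hi
    rw [hXP (f k) (hfv k hk)]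
    rcases hi with rfl | rfl
    · exact Finset.subset_union_left
    · exact Finset.subset_union_right
  have hPcls : ∀ k, k < n → ∀ i, i = 0 ∨ i = 1 → ∀ i', i' = 0 ∨ i' = 1 →
      ∀ x : β, x ∈ P (f k) i → x ∈ P (f k) i' → i = i' := by
    intro k hk i hi i' hi' x h1 h2
    by_contra hne
    have hd := hPdisj (f k) (hfv k hk)
    rcases hi with rfl | rfl <;> rcases hi' with rfl | rfl <;> first
      | rfl
      | exact Finset.disjoint_left.mp hd h1 h2
      | exact Finset.disjoint_left.mp hd h2 h1
      | exact absurd rfl hne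
  have hXcard : ∀ v ∈ G.verts, (X v).card = 2 * t := by
    intro v hv
    rw [hXP v hv, Finset.card_union_of_disjoint (hPdisj v hv), (hPcard v hv).1,
      (hPcard v hv).2]
    ring
  have hadj : ∀ k, k < n → AdjPair G (f k) (f ((k + 1) % n)) := by
    intro k hk
    have hne : k ≠ (k + 1) % n := fun h => hskne k hk h.symm
    have hm : G.mult (f k) (f ((k + 1) % n)) = t := by
      rw [hmult k hk ((k + 1) % n) (hsk_lt k) hne]
      simp
    have hpos : 0 < (G.edges.filter (fun e => G.inc e = {f k, f ((k + 1) % n)})).card := by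
      rw [show (G.edges.filter (fun e => G.inc e = {f k, f ((k + 1) % n)})).card
          = G.mult (f k) (f ((k + 1) % n)) from rfl, hm]; omega
    obtain ⟨e, he⟩ := Finset.card_pos.mp hpos
    have he' := Finset.mem_filter.mp he
    exact ⟨hfinj k hk _ (hsk_lt k) hne, e, he'.1, he'.2⟩
  have hconsec : ∀ k, k < n → ∀ k', k' < n → AdjPair G (f k) (f k') →
      k' = (k + 1) % n ∨ k = (k' + 1) % n := by
    intro k hk k' hk' ⟨hne, e, he, hince⟩
    have hkk' : k ≠ k' := fun h => hne (by rw [h])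
    have hpos : 0 < G.mult (f k) (f k') := by
      apply Finset.card_pos.mpr
      exact ⟨e, Finset.mem_filter.mpr ⟨he, hince⟩⟩
    rw [hmult k hk k' hk' hkk'] at hpos
    by_contra hcon
    push_neg at hcon
    rw [if_neg (by tauto)] at hpos
    omega
  -- every G-edge is a consecutive pair
  have hGinc : ∀ e ∈ G.edges, ∃ k, k < n ∧ G.inc e = {f k, f ((k + 1) % n)} := by
    intro e he
    obtain ⟨u, v, huv, hinc⟩ := Finset.card_eq_two.mp (hGinc2 e he)
    have hu : u ∈ G.verts := G.inc_sub e he (by rw [hinc]; simp)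
    have hv : v ∈ G.verts := G.inc_sub e he (by rw [hinc]; simp)
    rw [hverts] at hu hv
    obtain ⟨a, ha, rfl⟩ := Finset.mem_image.mp hu
    obtain ⟨b, hb, rfl⟩ := Finset.mem_image.mp hv
    rw [Finset.mem_range] at ha hb
    have hadj' : AdjPair G (f a) (f b) := ⟨huv, e, he, hinc⟩
    rcases hconsec a ha b hb hadj' with h | h
    · exact ⟨a, ha, by rw [hinc, h]⟩
    · exact ⟨b, hb, by rw [hinc, h, Finset.pair_comm]⟩
  -- pair determination
  have hpairdet : ∀ k, k < n → ∀ k', k' < n → ∀ i, i = 0 ∨ i = 1 → ∀ i', i' = 0 ∨ i' = 1 →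
      ∀ a₁ ∈ P (f k) i, ∀ b₁ ∈ P (f ((k + 1) % n)) i,
      ∀ a₂ ∈ P (f k') i', ∀ b₂ ∈ P (f ((k' + 1) % n)) i',
      ({a₁, b₁} : Finset β) = {a₂, b₂} → k = k' ∧ i = i' ∧ a₁ = a₂ ∧ b₁ = b₂ := by
    intro k hk k' hk' i hi i' hi' a₁ ha₁ b₁ hb₁ a₂ ha₂ b₂ hb₂ hpair
    have hXa₁ : a₁ ∈ X (f k) := hPX k hk i hi ha₁
    have hXb₁ : b₁ ∈ X (f ((k + 1) % n)) := hPX _ (hsk_lt k) i hi hb₁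
    have hXa₂ : a₂ ∈ X (f k') := hPX k' hk' i' hi' ha₂
    have hXb₂ : b₂ ∈ X (f ((k' + 1) % n)) := hPX _ (hsk_lt k') i' hi' hb₂
    have hmem : a₁ ∈ ({a₂, b₂} : Finset β) := by rw [← hpair]; simp
    rcases Finset.mem_insert.mp hmem with h | h
    · -- a₁ = a₂
      subst h
      have hkk' : k = k' := hXv k hk k' hk' a₁ hXa₁ hXa₂
      subst hkk'
      have hmem2 : b₁ ∈ ({a₁, b₂} : Finset β) := by rw [← hpair]; simp
      rcases Finset.mem_insert.mp hmem2 with h | h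
      · exfalso
        subst h
        exact (hskne k hk) (hXv _ (hsk_lt k) k hk b₁ hXb₁ hXa₁)
      · rw [Finset.mem_singleton] at h
        subst h
        have hii' : i = i' := hPcls k hk i hi i' hi' a₁ ha₁ ha₂
        exact ⟨rfl, hii', rfl, rfl⟩
    · -- a₁ = b₂
      exfalso
      rw [Finset.mem_singleton] at h
      subst h
      have h1 : k = (k' + 1) % n := hXv k hk _ (hsk_lt k') a₁ hXa₁ hXb₂
      have hmem2 : b₁ ∈ ({a₂, a₁} : Finset β) := by rw [← hpair]; simp
      rcases Finset.mem_insert.mp hmem2 with h | h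
      · subst h
        have h2 : (k + 1) % n = k' := hXv _ (hsk_lt k) k' hk' b₁ hXb₁ hXa₂
        exact aux_mod_two hn3 hk
          (by rw [show k + 2 = k + 1 + 1 from rfl, ← Nat.mod_add_mod, h2, ← h1])
      · rw [Finset.mem_singleton] at h
        subst h
        exact (hskne k hk).symm (hXv k hk _ (hsk_lt k) b₁ hXa₁ hXb₁)
  -- G.edges cardinality
  have hGedges_eq : G.edges = (Finset.range n).biUnion
      (fun k => G.edges.filter (fun e => G.inc e = {f k, f ((k + 1) % n)})) := by
    apply Finset.Subset.antisymm
    · intro e he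
      obtain ⟨k, hk, hinc⟩ := hGinc e he
      exact Finset.mem_biUnion.mpr ⟨k, Finset.mem_range.mpr hk,
        Finset.mem_filter.mpr ⟨he, hinc⟩⟩
    · intro e he
      obtain ⟨k, _, hmem⟩ := Finset.mem_biUnion.mp he
      exact (Finset.mem_filter.mp hmem).1
  have hpairinj : ∀ k, k < n → ∀ k', k' < n →
      ({f k, f ((k + 1) % n)} : Finset α) = {f k', f ((k' + 1) % n)} → k = k' := by
    intro k hk k' hk' hpair
    have hmem : f k ∈ ({f k', f ((k' + 1) % n)} : Finset α) := by rw [← hpair]; simp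
    rcases Finset.mem_insert.mp hmem with h | h
    · exact hfi k hk k' hk' h
    · rw [Finset.mem_singleton] at h
      have h1 : k = (k' + 1) % n := hfi k hk _ (hsk_lt k') h
      have hmem2 : f k' ∈ ({f k, f ((k + 1) % n)} : Finset α) := by rw [hpair]; simp
      rcases Finset.mem_insert.mp hmem2 with h2 | h2
      · exact (hfi k' hk' k hk h2).symm
      · rw [Finset.mem_singleton] at h2
        have h3 : k' = (k + 1) % n := hfi k' hk' _ (hsk_lt k) h2
        exfalso
        apply aux_mod_two hn3 hk
        rw [show k + 2 = k + 1 + 1 by ring, ← Nat.mod_add_mod, ← h3, ← h1]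
  have hGcard : G.edges.card = n * t := by
    rw [hGedges_eq, Finset.card_biUnion]
    · have : ∀ k ∈ Finset.range n,
          (G.edges.filter (fun e => G.inc e = {f k, f ((k + 1) % n)})).card = t := by
        intro k hk
        rw [Finset.mem_range] at hk
        have := hmult k hk ((k + 1) % n) (hsk_lt k) (fun h => hskne k hk h.symm)
        simp only [if_pos (Or.inl rfl)] at this
        exact this
      rw [Finset.sum_congr rfl this, Finset.sum_const, Finset.card_range, smul_eq_mul]
    · intro k hk k' hk' hne
      rw [Finset.mem_coe, Finset.mem_range] at hk hk'
      simp only [Function.onFun, Finset.disjoint_left]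
      intro e he1 he2
      have h1 := (Finset.mem_filter.mp he1).2
      have h2 := (Finset.mem_filter.mp he2).2
      exact hne (hpairinj k hk k' hk' (h1.symm.trans h2))
  -- upper bound on H.edges
  have hMub : ∀ e ∈ G.edges, (M e).card ≤ 2 * t := by
    intro e he
    obtain ⟨hMsub, hMe, hMdisj⟩ := hMprop e he
    have hpos : 0 < (G.inc e).card := by rw [hGinc2 e he]; omega
    obtain ⟨u, hu⟩ := Finset.card_pos.mp hpos
    have huv : u ∈ G.verts := G.inc_sub e he hu
    have hinjOn : Set.InjOn (fun e' => H.inc e' ∩ X u) (M e) := by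
      intro e₁ h₁ e₂ h₂ heq
      by_contra hne
      have hd := hMdisj e₁ h₁ e₂ h₂ hne
      have hc : (H.inc e₁ ∩ X u).card = 1 := (hMe e₁ h₁).1 u hu
      have hposz : 0 < (H.inc e₁ ∩ X u).card := by omega
      obtain ⟨z, hz⟩ := Finset.card_pos.mp hposz
      have hz₁ : z ∈ H.inc e₁ := (Finset.mem_inter.mp hz).1
      have hz₂ : z ∈ H.inc e₂ := by
        have heq' : H.inc e₁ ∩ X u = H.inc e₂ ∩ X u := heq
        have : z ∈ H.inc e₂ ∩ X u := heq' ▸ hz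
        exact (Finset.mem_inter.mp this).1
      exact Finset.disjoint_left.mp hd hz₁ hz₂
    calc (M e).card = ((M e).image (fun e' => H.inc e' ∩ X u)).card :=
          (Finset.card_image_of_injOn hinjOn).symm
      _ ≤ ((X u).image (fun z => ({z} : Finset β))).card := by
          apply Finset.card_le_card
          intro S hS
          obtain ⟨e', he', rfl⟩ := Finset.mem_image.mp hS
          have hc : (H.inc e' ∩ X u).card = 1 := (hMe e' he').1 u hu
          obtain ⟨z, hz⟩ := Finset.card_eq_one.mp hc
          have hzX : z ∈ X u := by
            have : z ∈ H.inc e' ∩ X u := hz ▸ Finset.mem_singleton_self z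
            exact (Finset.mem_inter.mp this).2
          exact Finset.mem_image.mpr ⟨z, hzX, hz.symm⟩
      _ ≤ (X u).card := Finset.card_image_le
      _ = 2 * t := hXcard u huv
  have hHub : H.edges.card ≤ n * t * (2 * t) := by
    rw [hHed]
    calc (G.edges.biUnion M).card ≤ ∑ e ∈ G.edges, (M e).card := Finset.card_biUnion_le
      _ ≤ ∑ _e ∈ G.edges, 2 * t := Finset.sum_le_sum hMub
      _ = G.edges.card * (2 * t) := by rw [Finset.sum_const, smul_eq_mul]
      _ = n * t * (2 * t) := by rw [hGcard]
  -- the set of all same-class pairs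
  set Pr : ℕ → ℕ → Finset (Finset β) := fun k i =>
    ((P (f k) i) ×ˢ (P (f ((k + 1) % n)) i)).image (fun pq => {pq.1, pq.2}) with hPr
  have hPrmem : ∀ k i S, S ∈ Pr k i ↔
      ∃ x ∈ P (f k) i, ∃ y ∈ P (f ((k + 1) % n)) i, S = ({x, y} : Finset β) := by
    intro k i S
    rw [hPr]
    simp only [Finset.mem_image, Finset.mem_product, Prod.exists]
    constructor
    · rintro ⟨x, y, ⟨hx, hy⟩, rfl⟩; exact ⟨x, hx, y, hy, rfl⟩
    · rintro ⟨x, hx, y, hy, rfl⟩; exact ⟨x, y, ⟨hx, hy⟩, rfl⟩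
  have hPrcard : ∀ k, k < n → ∀ i, i = 0 ∨ i = 1 → (Pr k i).card = t * t := by
    intro k hk i hi
    rw [hPr]
    rw [Finset.card_image_of_injOn]
    · rw [Finset.card_product]
      rcases hi with rfl | rfl
      · rw [(hPcard (f k) (hfv k hk)).1, (hPcard (f ((k + 1) % n)) (hfv _ (hsk_lt k))).1]
      · rw [(hPcard (f k) (hfv k hk)).2, (hPcard (f ((k + 1) % n)) (hfv _ (hsk_lt k))).2]
    · rintro ⟨a₁, b₁⟩ h₁ ⟨a₂, b₂⟩ h₂ heq
      simp only [Finset.mem_coe, Finset.mem_product] at h₁ h₂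
      obtain ⟨-, -, h3, h4⟩ := hpairdet k hk k hk i hi i hi a₁ h₁.1 b₁ h₁.2 a₂ h₂.1 b₂ h₂.2 heq
      simp [h3, h4]
  set SS : Finset (Finset β) := (Finset.range n).biUnion (fun k => Pr k 0 ∪ Pr k 1) with hSS
  have hSScard : SS.card = n * (t * t + t * t) := by
    rw [hSS, Finset.card_biUnion]
    · have hconst : ∀ k ∈ Finset.range n, (Pr k 0 ∪ Pr k 1).card = t * t + t * t := by
        intro k hk
        rw [Finset.mem_range] at hk
        rw [Finset.card_union_of_disjoint, hPrcard k hk 0 (Or.inl rfl),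
          hPrcard k hk 1 (Or.inr rfl)]
        simp only [Finset.disjoint_left]
        intro S hS0 hS1
        obtain ⟨x₁, hx₁, y₁, hy₁, rfl⟩ := (hPrmem k 0 S).mp hS0
        obtain ⟨x₂, hx₂, y₂, hy₂, heq⟩ := (hPrmem k 1 _).mp hS1
        obtain ⟨-, h01, -, -⟩ := hpairdet k hk k hk 0 (Or.inl rfl) 1 (Or.inr rfl)
          x₁ hx₁ y₁ hy₁ x₂ hx₂ y₂ hy₂ heq
        omega
      rw [Finset.sum_congr rfl hconst, Finset.sum_const, Finset.card_range, smul_eq_mul]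
    · intro k hk k' hk' hne
      rw [Finset.mem_coe, Finset.mem_range] at hk hk'
      simp only [Function.onFun, Finset.disjoint_left]
      intro S hS1 hS2
      apply hne
      have hget : ∀ m, m < n → S ∈ Pr m 0 ∪ Pr m 1 → ∃ j, (j = 0 ∨ j = 1) ∧
          ∃ x ∈ P (f m) j, ∃ y ∈ P (f ((m + 1) % n)) j, S = ({x, y} : Finset β) := by
        intro m hm hSm
        rcases Finset.mem_union.mp hSm with h | h
        · exact ⟨0, Or.inl rfl, (hPrmem m 0 S).mp h⟩
        · exact ⟨1, Or.inr rfl, (hPrmem m 1 S).mp h⟩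
      obtain ⟨j₁, hj₁, x₁, hx₁, y₁, hy₁, rfl⟩ := hget k hk hS1
      obtain ⟨j₂, hj₂, x₂, hx₂, y₂, hy₂, heq⟩ := hget k' hk' hS2
      exact (hpairdet k hk k' hk' j₁ hj₁ j₂ hj₂ x₁ hx₁ y₁ hy₁ x₂ hx₂ y₂ hy₂ heq).1
  have hSSsub : SS ⊆ H.edges.image H.inc := by
    intro S hS
    obtain ⟨k, hk, hS'⟩ := Finset.mem_biUnion.mp hS
    rw [Finset.mem_range] at hk
    have hget : ∃ j ∈ ({0, 1} : Finset ℕ), ∃ x ∈ P (f k) j,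
        ∃ y ∈ P (f ((k + 1) % n)) j, S = ({x, y} : Finset β) := by
      rcases Finset.mem_union.mp hS' with h | h
      · exact ⟨0, by simp, (hPrmem k 0 S).mp h⟩
      · exact ⟨1, by simp, (hPrmem k 1 S).mp h⟩
    obtain ⟨j, hj, x, hx, y, hy, rfl⟩ := hget
    obtain ⟨e, he, hince⟩ := hPcomp j hj (f k) (hfv k hk) (f ((k + 1) % n))
      (hfv _ (hsk_lt k)) (hadj k hk) x hx y hy
    exact Finset.mem_image.mpr ⟨e, he, hince⟩
  have hinj : Set.InjOn H.inc H.edges := by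
    apply Finset.card_image_iff.mp
    have h1 : SS.card ≤ (H.edges.image H.inc).card := Finset.card_le_card hSSsub
    have h2 : (H.edges.image H.inc).card ≤ H.edges.card := Finset.card_image_le
    have h3 : n * t * (2 * t) = n * (t * t + t * t) := by ring
    omega
  have hPXv : ∀ v ∈ G.verts, ∀ i : ℕ, i = 0 ∨ i = 1 → P v i ⊆ X v := by
    intro v hv i hi
    rw [hXP v hv]
    rcases hi with rfl | rfl
    · exact Finset.subset_union_left
    · exact Finset.subset_union_right
  -- Part 1: connectivity
  have hAdjSymm : Symmetric G.Adj := by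
    rintro a b ⟨hne, e, he, h1, h2⟩; exact ⟨hne.symm, e, he, h2, h1⟩
  have hAdjOf : ∀ u v, AdjPair G u v → G.Adj u v := by
    rintro u v ⟨hne, e, he, hinc⟩
    exact ⟨hne, e, he, by rw [hinc]; simp, by rw [hinc]; simp⟩
  have hreach : ∀ k, k < n → Relation.ReflTransGen G.Adj (f 0) (f k) := by
    intro k
    induction k with
    | zero => intro _; exact Relation.ReflTransGen.refl
    | succ m ih =>
      intro hm
      have hmn : m < n := by omega
      have h2 : G.Adj (f m) (f (m + 1)) := by
        have := hAdjOf _ _ (hadj m hmn)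
        rwa [Nat.mod_eq_of_lt hm] at this
      exact (ih hmn).tail h2
  have hConn : G.Connected := by
    intro u hu v hv
    rw [hverts] at hu hv
    obtain ⟨ia, hia, rfl⟩ := Finset.mem_image.mp hu
    obtain ⟨ib, hib, rfl⟩ := Finset.mem_image.mp hv
    rw [Finset.mem_range] at hia hib
    haveI : Std.Symm G.Adj := ⟨fun a b h => hAdjSymm h⟩
    exact (Std.Symm.symm (r := Relation.ReflTransGen G.Adj) _ _ (hreach ia hia)).trans (hreach ib hib)
  -- Part 2: degree bound
  have hDeg : ∀ v ∈ G.verts, G.degree v ≤ (X v).card := by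
    intro v hv
    have hv' := hv
    rw [hverts] at hv'
    obtain ⟨k, hkr, rfl⟩ := Finset.mem_image.mp hv'
    rw [Finset.mem_range] at hkr
    rw [hXcard (f k) hv]
    obtain ⟨prev, hprevlt, hprevsucc⟩ : ∃ pv, pv < n ∧ (pv + 1) % n = k :=
      ⟨(k + (n - 1)) % n, Nat.mod_lt _ (by omega), aux_mod_prev hn3 hkr⟩
    have hprevne : prev ≠ k := by
      intro h; rw [h] at hprevsucc; exact hskne k hkr hprevsucc
    have hsub : G.edges.filter (fun e => f k ∈ G.inc e) ⊆
        G.edges.filter (fun e => G.inc e = {f prev, f k}) ∪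
        G.edges.filter (fun e => G.inc e = {f k, f ((k + 1) % n)}) := by
      intro e he
      obtain ⟨he', hmem⟩ := Finset.mem_filter.mp he
      obtain ⟨m, hm, hinc⟩ := hGinc e he'
      rw [hinc] at hmem
      rcases Finset.mem_insert.mp hmem with h | h
      · have hkm : k = m := hfi k hkr m hm h
        subst hkm
        exact Finset.mem_union_right _ (Finset.mem_filter.mpr ⟨he', hinc⟩)
      · rw [Finset.mem_singleton] at h
        have hkm : k = (m + 1) % n := hfi k hkr _ (hsk_lt m) h
        have hmprev : m = prev := by
          apply aux_mod_inj (a := 1) hm hprevlt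
          rw [Nat.add_comm 1 m, Nat.add_comm 1 prev, hprevsucc, ← hkm]
        apply Finset.mem_union_left
        apply Finset.mem_filter.mpr
        refine ⟨he', ?_⟩
        rw [hinc, ← hkm, hmprev]
    have hcardA : (G.edges.filter (fun e => G.inc e = {f prev, f k})).card = t := by
      have := hmult prev hprevlt k hkr hprevne
      rw [if_pos (Or.inl hprevsucc.symm)] at this
      exact this
    have hcardB : (G.edges.filter (fun e => G.inc e = {f k, f ((k + 1) % n)})).card = t := by
      have := hmult k hkr ((k + 1) % n) (hsk_lt k) (fun h => hskne k hkr h.symm)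
      rw [if_pos (Or.inl rfl)] at this
      exact this
    calc G.degree (f k) ≤ (G.edges.filter (fun e => G.inc e = {f prev, f k}) ∪
          G.edges.filter (fun e => G.inc e = {f k, f ((k + 1) % n)})).card :=
          Finset.card_le_card hsub
      _ ≤ t + t := by
          apply le_trans (Finset.card_union_le _ _)
          rw [hcardA, hcardB]
      _ ≤ 2 * t := by omega
  -- Part 3a: no independent transversal
  have hNoIT : ¬ HasIT H G.verts X := by
    rintro ⟨T, hTind, hTcard⟩
    have hβ : Nonempty β := by
      have h1 : 0 < (P (f 0) 0).card := by
        rw [(hPcard (f 0) (hfv 0 (by omega))).1]; omega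
      obtain ⟨b, _⟩ := Finset.card_pos.mp h1
      exact ⟨b⟩
    have hz0 : ∀ k, ∃ w : β, k < n → T ∩ X (f k) = {w} := by
      intro k
      by_cases hk : k < n
      · obtain ⟨w, hw⟩ := Finset.card_eq_one.mp (hTcard (f k) (hfv k hk))
        exact ⟨w, fun _ => hw⟩
      · exact ⟨hβ.some, fun h => absurd h hk⟩
    choose z hz using hz0
    have hzT : ∀ k, k < n → z k ∈ T := by
      intro k hk
      have : z k ∈ T ∩ X (f k) := by rw [hz k hk]; exact Finset.mem_singleton_self _
      exact (Finset.mem_inter.mp this).1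
    have hzX : ∀ k, k < n → z k ∈ X (f k) := by
      intro k hk
      have : z k ∈ T ∩ X (f k) := by rw [hz k hk]; exact Finset.mem_singleton_self _
      exact (Finset.mem_inter.mp this).2
    obtain ⟨c, hcdef⟩ : ∃ c : ℕ → ℕ, ∀ k, c k = if z k ∈ P (f k) 0 then 0 else 1 :=
      ⟨fun k => if z k ∈ P (f k) 0 then 0 else 1, fun k => rfl⟩
    have hc01 : ∀ k, k < n → c k = 0 ∨ c k = 1 := by
      intro k _; rw [hcdef]; split
      · exact Or.inl rfl
      · exact Or.inr rfl
    have hzc : ∀ k, k < n → z k ∈ P (f k) (c k) := by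
      intro k hk
      rw [hcdef]
      split
      · assumption
      · have hm := hzX k hk
        rw [hXP (f k) (hfv k hk)] at hm
        rcases Finset.mem_union.mp hm with h | h
        · exact absurd h (by assumption)
        · exact h
    apply aux_parity hn3 hodd c hc01
    intro k hk heq
    have hk' : (k + 1) % n < n := hsk_lt k
    have hcmem : c k ∈ ({0, 1} : Finset ℕ) := by
      rcases hc01 k hk with h | h <;> simp [h]
    have hy' : z ((k + 1) % n) ∈ P (f ((k + 1) % n)) (c k) := by
      rw [heq]; exact hzc _ hk'
    obtain ⟨e, he, hince⟩ := hPcomp (c k) hcmem (f k) (hfv k hk) (f ((k + 1) % n))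
      (hfv _ hk') (hadj k hk) (z k) (hzc k hk) (z ((k + 1) % n)) hy'
    apply hTind e he
    rw [hince]
    exact Finset.insert_subset (hzT k hk) (Finset.singleton_subset_iff.mpr (hzT _ hk'))
  refine ⟨hConn, hDeg, hNoIT, ?_⟩
  -- Part 3b: minimality
  intro e₀ he₀
  obtain ⟨i, hi, u, hu, v, hv, huvadj, x₀, hx₀, y₀, hy₀, hinc₀⟩ := hPed e₀ he₀
  have hmain : ∃ aa, aa < n ∧ ∃ x y : β, x ∈ P (f aa) i ∧ y ∈ P (f ((aa + 1) % n)) i ∧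
      H.inc e₀ = {x, y} := by
    rw [hverts] at hu hv
    obtain ⟨aa, haa, rfl⟩ := Finset.mem_image.mp hu
    obtain ⟨bb, hbb, rfl⟩ := Finset.mem_image.mp hv
    rw [Finset.mem_range] at haa hbb
    rcases hconsec aa haa bb hbb huvadj with h | h
    · exact ⟨aa, haa, x₀, y₀, hx₀, h ▸ hy₀, hinc₀⟩
    · exact ⟨bb, hbb, y₀, x₀, hy₀, h ▸ hx₀, by rw [hinc₀, Finset.pair_comm]⟩
  obtain ⟨a, ha, x, y, hx, hy, hxyinc⟩ := hmain
  have hi01 : i = 0 ∨ i = 1 := by simpa using hi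
  obtain ⟨o, hodef⟩ : ∃ o : ℕ, o = 1 - i := ⟨1 - i, rfl⟩
  have ho01 : o = 0 ∨ o = 1 := by omega
  have hio : i ≠ o := by omega
  obtain ⟨p, hpdef⟩ : ∃ p : ℕ → ℕ → β, ∀ k j, p k j =
      if h : (P (f k) j).Nonempty then h.choose else x :=
    ⟨fun k j => if h : (P (f k) j).Nonempty then h.choose else x, fun _ _ => rfl⟩
  have hpmem : ∀ k, k < n → ∀ j, j = 0 ∨ j = 1 → p k j ∈ P (f k) j := by
    intro k hk j hj
    have hne : (P (f k) j).Nonempty := by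
      apply Finset.card_pos.mp
      rcases hj with rfl | rfl
      · rw [(hPcard (f k) (hfv k hk)).1]; omega
      · rw [(hPcard (f k) (hfv k hk)).2]; omega
    rw [hpdef, dif_pos hne]
    exact hne.choose_spec
  obtain ⟨cls, hcls0, hcls1, hclsodd, hclseven⟩ : ∃ cls : ℕ → ℕ, cls 0 = i ∧ cls 1 = i ∧
      (∀ j, j ≠ 0 → j % 2 = 1 → cls j = i) ∧ (∀ j, j ≠ 0 → j % 2 = 0 → cls j = o) := by
    refine ⟨fun j => if j = 0 then i else if j % 2 = 1 then i else o, rfl, by norm_num, ?_, ?_⟩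
    · intro j h0 h1; simp [h0, h1]
    · intro j h0 h1; simp [h0, h1]
  obtain ⟨s, hs0, hs1, hsrest⟩ : ∃ s : ℕ → β, s 0 = x ∧ s 1 = y ∧
      ∀ j, j ≠ 0 → j ≠ 1 → s j = p ((a + j) % n) (cls j) := by
    refine ⟨fun j => if j = 0 then x else if j = 1 then y else p ((a + j) % n) (cls j),
      rfl, by norm_num, ?_⟩
    intro j h0 h1; simp [h0, h1]
  have hcls01 : ∀ j, cls j = 0 ∨ cls j = 1 := by
    intro j
    by_cases h0 : j = 0
    · rw [h0, hcls0]; exact hi01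
    · rcases Nat.mod_two_eq_zero_or_one j with h | h
      · rw [hclseven j h0 h]; exact ho01
      · rw [hclsodd j h0 h]; exact hi01
  have hscls : ∀ j, j < n → s j ∈ P (f ((a + j) % n)) (cls j) := by
    intro j hj
    by_cases h0 : j = 0
    · subst h0
      rw [hs0, hcls0, Nat.add_zero, Nat.mod_eq_of_lt ha]
      exact hx
    · by_cases h1 : j = 1
      · subst h1
        rw [hs1, hcls1]
        exact hy
      · rw [hsrest j h0 h1]
        exact hpmem _ (Nat.mod_lt _ (by omega)) _ (hcls01 j)
  have hclsne : ∀ j, j ≠ 0 → j < n → cls j ≠ cls ((j + 1) % n) := by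
    intro j h0 hj
    by_cases hlast : j = n - 1
    · subst hlast
      rw [show n - 1 + 1 = n by omega, Nat.mod_self, hcls0]
      have he2 : (n - 1) % 2 = 0 := by obtain ⟨m, hm⟩ := hodd; omega
      rw [hclseven (n - 1) h0 he2]
      exact hio.symm
    · have hj1 : j + 1 < n := by omega
      rw [Nat.mod_eq_of_lt hj1]
      have hj10 : j + 1 ≠ 0 := by omega
      rcases Nat.mod_two_eq_zero_or_one j with h | h
      · rw [hclseven j h0 h, hclsodd (j + 1) hj10 (by omega)]
        exact hio.symm
      · rw [hclsodd j h0 h, hclseven (j + 1) hj10 (by omega)]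
        exact hio
  have hjinj : ∀ j, j < n → ∀ j', j' < n → (a + j) % n = (a + j') % n → j = j' := by
    intro j hj j' hj' h
    exact aux_mod_inj hj hj' h
  refine ⟨(Finset.range n).image s, ?_, ?_⟩
  · -- independence in H - e₀
    intro e he hsub
    have he' : e ∈ H.edges := Finset.mem_of_mem_erase he
    have hee₀ : e ≠ e₀ := Finset.ne_of_mem_erase he
    obtain ⟨i', hi', u', hu', v', hv', hadj', x', hx', y', hy', hince⟩ := hPed e he'
    have hi'01 : i' = 0 ∨ i' = 1 := by simpa using hi'
    have hsub' : H.inc e ⊆ (Finset.range n).image s := hsub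
    have hx'T : x' ∈ (Finset.range n).image s := hsub' (by rw [hince]; simp)
    have hy'T : y' ∈ (Finset.range n).image s := hsub' (by rw [hince]; simp)
    obtain ⟨j₁, hj₁r, hj₁⟩ := Finset.mem_image.mp hx'T
    obtain ⟨j₂, hj₂r, hj₂⟩ := Finset.mem_image.mp hy'T
    rw [Finset.mem_range] at hj₁r hj₂r
    have hk₁lt : (a + j₁) % n < n := Nat.mod_lt _ (by omega)
    have hk₂lt : (a + j₂) % n < n := Nat.mod_lt _ (by omega)
    have hu'k : u' = f ((a + j₁) % n) := by
      by_contra hne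
      have hxX : x' ∈ X u' := hPXv u' hu' i' hi'01 hx'
      have hxX2 : x' ∈ X (f ((a + j₁) % n)) := by
        rw [← hj₁]
        exact hPXv _ (hfv _ hk₁lt) _ (hcls01 j₁) (hscls j₁ hj₁r)
      exact Finset.disjoint_left.mp (hXdisj u' hu' _ (hfv _ hk₁lt) hne) hxX hxX2
    have hv'k : v' = f ((a + j₂) % n) := by
      by_contra hne
      have hyX : y' ∈ X v' := hPXv v' hv' i' hi'01 hy'
      have hyX2 : y' ∈ X (f ((a + j₂) % n)) := by
        rw [← hj₂]
        exact hPXv _ (hfv _ hk₂lt) _ (hcls01 j₂) (hscls j₂ hj₂r)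
      exact Finset.disjoint_left.mp (hXdisj v' hv' _ (hfv _ hk₂lt) hne) hyX hyX2
    have hscls₁ : x' ∈ P (f ((a + j₁) % n)) (cls j₁) := hj₁ ▸ hscls j₁ hj₁r
    have hscls₂ : y' ∈ P (f ((a + j₂) % n)) (cls j₂) := hj₂ ▸ hscls j₂ hj₂r
    have hieq₁ : i' = cls j₁ :=
      hPcls _ hk₁lt i' hi'01 _ (hcls01 j₁) x' (hu'k ▸ hx') hscls₁
    have hieq₂ : i' = cls j₂ :=
      hPcls _ hk₂lt i' hi'01 _ (hcls01 j₂) y' (hv'k ▸ hy') hscls₂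
    have hcons := hconsec _ hk₁lt _ hk₂lt (by rw [← hu'k, ← hv'k]; exact hadj')
    have htrans : ∀ jA jB : ℕ, jA < n → jB < n →
        (a + jB) % n = ((a + jA) % n + 1) % n → jB = (jA + 1) % n := by
      intro jA jB hA hB h
      apply aux_mod_inj hB (hsk_lt jA)
      rw [h, Nat.mod_add_mod, Nat.add_mod_mod, Nat.add_assoc]
    rcases hcons with h | h
    · have hj21 : j₂ = (j₁ + 1) % n := htrans j₁ j₂ hj₁r hj₂r h
      by_cases h0 : j₁ = 0
      · have hj2 : j₂ = 1 := by
          rw [hj21, h0]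
          exact Nat.mod_eq_of_lt (by omega)
        have hxx : x' = x := by rw [← hj₁, h0, hs0]
        have hyy : y' = y := by rw [← hj₂, hj2, hs1]
        have hiq : H.inc e = H.inc e₀ := by rw [hince, hxx, hyy, hxyinc]
        exact hee₀ (hinj he' he₀ hiq)
      · exact hclsne j₁ h0 hj₁r (by rw [← hj21, ← hieq₁, ← hieq₂])
    · have hj12 : j₁ = (j₂ + 1) % n := htrans j₂ j₁ hj₂r hj₁r h
      by_cases h0 : j₂ = 0
      · have hj1' : j₁ = 1 := by
          rw [hj12, h0]
          exact Nat.mod_eq_of_lt (by omega)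
        have hxx : x' = y := by rw [← hj₁, hj1', hs1]
        have hyy : y' = x := by rw [← hj₂, h0, hs0]
        have hiq : H.inc e = H.inc e₀ := by
          rw [hince, hxx, hyy, hxyinc, Finset.pair_comm]
        exact hee₀ (hinj he' he₀ hiq)
      · exact hclsne j₂ h0 hj₂r (by rw [← hj12, ← hieq₁, ← hieq₂])
  · -- transversal condition
    intro v' hv'
    rw [hverts] at hv'
    obtain ⟨k, hkr, rfl⟩ := Finset.mem_image.mp hv'
    rw [Finset.mem_range] at hkr
    obtain ⟨j, hjn, hjk⟩ : ∃ j, j < n ∧ (a + j) % n = k := by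
      refine ⟨(k + n - a) % n, Nat.mod_lt _ (by omega), ?_⟩
      rw [Nat.add_mod_mod, show a + (k + n - a) = k + n by omega, Nat.add_mod_right,
        Nat.mod_eq_of_lt hkr]
    have hset : (Finset.range n).image s ∩ X (f k) = {s j} := by
      apply Finset.ext
      intro w
      simp only [Finset.mem_inter, Finset.mem_image, Finset.mem_range, Finset.mem_singleton]
      constructor
      · rintro ⟨⟨j', hj', rfl⟩, hwX⟩
        have hmemX : s j' ∈ X (f ((a + j') % n)) :=
          hPXv _ (hfv _ (Nat.mod_lt _ (by omega))) _ (hcls01 j') (hscls j' hj')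
        have hkeq : (a + j') % n = k :=
          hXv _ (Nat.mod_lt _ (by omega)) k hkr _ hmemX hwX
        rw [hjinj j' hj' j hjn (hkeq.trans hjk.symm)]
      · rintro rfl
        refine ⟨⟨j, hjn, rfl⟩, ?_⟩
        have hm := hscls j hjn
        rw [hjk] at hm
        exact hPXv _ (hfv k hkr) _ (hcls01 j) hm
    rw [hset, Finset.card_singleton]
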